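/- Let b_0, …, b_{n-1} be an F-basis of K and X a finite nonempty subset of F. Then the number of tuples (a_0, …, a_{n-1}) ∈ X^n such that Σ_k a_k·b_k is NOT a normal element of K/F is at most n·|X|^{n-1}. -/

import Mathlib

open Finset MvPolynomial in
private lemma sz_aux {K : Type*} [Field K] (X : Finset K) [DecidableEq K] :
    ∀ (n : ℕ) (p : MvPolynomial (Fin n) K), p ≠ 0 →
      ((Fintype.piFinset fun _ : Fin n => X).filter fun a => MvPolynomial.eval a p = 0).card
          * X.card
        ≤ p.totalDegree * X.card ^ n := by
  intro n
  induction n with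
  | zero =>
    intro p hp
    have : ((Fintype.piFinset fun _ : Fin 0 => X).filter
        fun a => MvPolynomial.eval a p = 0) = ∅ := by
      rw [Finset.filter_eq_empty_iff]
      intro a _
      obtain ⟨c, rfl⟩ := MvPolynomial.C_surjective (Fin 0) p
      simpa using fun h => hp (by simp [h])
    rw [this, Finset.card_empty, Nat.zero_mul]
    exact Nat.zero_le _
  | succ n ih =>
    intro p hp
    set q := MvPolynomial.finSuccEquiv K n p with hqdef
    have hq0 : q ≠ 0 := fun h => hp ((map_eq_zero_iff _ (AlgEquiv.injective _)).mp h)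
    set k := q.natDegree with hk
    set pk := q.coeff k with hpkdef
    have hpk0 : pk ≠ 0 := Polynomial.leadingCoeff_ne_zero.mpr hq0
    have hdeg : pk.totalDegree + k ≤ p.totalDegree :=
      MvPolynomial.totalDegree_coeff_finSuccEquiv_add_le p k hpk0
    set S := Fintype.piFinset fun _ : Fin n => X with hS
    set B := (Fintype.piFinset fun _ : Fin (n+1) => X).filter
      fun a => MvPolynomial.eval a p = 0 with hB
    -- fiber decomposition over the tail
    have hmaps : ∀ a ∈ B, Fin.tail a ∈ S := by
      intro a ha
      rw [hB, Finset.mem_filter] at ha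
      rw [hS, Fintype.mem_piFinset]
      intro i
      exact (Fintype.mem_piFinset.mp ha.1) i.succ
    have hcard : B.card = ∑ s ∈ S, (B.filter fun a => Fin.tail a = s).card :=
      Finset.card_eq_sum_card_fiberwise hmaps
    -- each fiber injects into roots in X
    have hfiber : ∀ s ∈ S, (B.filter fun a => Fin.tail a = s).card
        ≤ (X.filter fun y => MvPolynomial.eval (Fin.cons y s) p = 0).card := by
      intro s _
      apply Finset.card_le_card_of_injOn (fun a => a 0)
      · intro a ha
        rw [Finset.mem_coe, Finset.mem_filter] at ha ⊢
        obtain ⟨haB, hat⟩ := ha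
        rw [hB, Finset.mem_filter] at haB
        refine ⟨(Fintype.mem_piFinset.mp haB.1) 0, ?_⟩
        rw [← hat, Fin.cons_self_tail]
        exact haB.2
      · intro a ha a' ha' h0
        simp only [Finset.mem_coe, Finset.mem_filter] at ha ha'
        have := ha.2.trans ha'.2.symm
        funext i
        refine Fin.cases ?_ ?_ i
        · exact h0
        · intro j; exact congrFun this j
    -- root bound for good tails, trivial bound else
    have hroot : ∀ s ∈ S, (X.filter fun y => MvPolynomial.eval (Fin.cons y s) p = 0).card
        ≤ if MvPolynomial.eval s pk = 0 then X.card else k := by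
      intro s _
      split_ifs with h
      · exact Finset.card_filter_le _ _
      · set r := q.map (MvPolynomial.eval s) with hr
        have hr0 : r ≠ 0 := by
          intro h0
          apply h
          have : r.coeff k = 0 := by rw [h0]; simp
          rwa [hr, Polynomial.coeff_map] at this
        calc (X.filter fun y => MvPolynomial.eval (Fin.cons y s) p = 0).card
            ≤ r.roots.toFinset.card := by
              apply Finset.card_le_card
              intro y hy
              rw [Finset.mem_filter] at hy
              rw [Multiset.mem_toFinset, Polynomial.mem_roots hr0]
              rw [MvPolynomial.eval_eq_eval_mv_eval'] at hy
              exact hy.2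
          _ ≤ Multiset.card r.roots := r.roots.toFinset_card_le
          _ ≤ r.natDegree := Polynomial.card_roots' r
          _ ≤ k := Polynomial.natDegree_map_le
    have hsum : B.card ≤ (S.filter fun s => MvPolynomial.eval s pk = 0).card * X.card
        + X.card ^ n * k := by
      rw [hcard]
      calc ∑ s ∈ S, (B.filter fun a => Fin.tail a = s).card
          ≤ ∑ s ∈ S, if MvPolynomial.eval s pk = 0 then X.card else k := by
            apply Finset.sum_le_sum
            intro s hs
            exact (hfiber s hs).trans (hroot s hs)
        _ = (S.filter fun s => MvPolynomial.eval s pk = 0).card * X.card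
            + (S.filter fun s => ¬ MvPolynomial.eval s pk = 0).card * k := by
            rw [Finset.sum_ite, Finset.sum_const, Finset.sum_const, smul_eq_mul, smul_eq_mul]
        _ ≤ _ := by
            gcongr
            calc (S.filter fun s => ¬ MvPolynomial.eval s pk = 0).card
                ≤ S.card := Finset.card_filter_le _ _
              _ = X.card ^ n := by
                  rw [hS, Fintype.card_piFinset]
                  simp
    have hS0 : (S.filter fun s => MvPolynomial.eval s pk = 0).card * X.card
        ≤ pk.totalDegree * X.card ^ n := ih pk hpk0
    calc B.card * X.card
        ≤ ((S.filter fun s => MvPolynomial.eval s pk = 0).card * X.card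
            + X.card ^ n * k) * X.card := by gcongr
      _ ≤ (pk.totalDegree * X.card ^ n + X.card ^ n * k) * X.card := by gcongr
      _ = ((pk.totalDegree + k) * X.card ^ n) * X.card := by ring
      _ ≤ (p.totalDegree * X.card ^ n) * X.card := by gcongr
      _ = p.totalDegree * X.card ^ (n + 1) := by ring

private lemma sz {K : Type*} [Field K] [DecidableEq K] {n d : ℕ}
    (p : MvPolynomial (Fin n) K) (hp : p ≠ 0) (hd : p.totalDegree ≤ d)
    (X : Finset K) (hX : X.Nonempty) :
    ((Fintype.piFinset fun _ : Fin n => X).filter fun a => MvPolynomial.eval a p = 0).card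
      ≤ d * X.card ^ (n - 1) := by
  have hXpos : 0 < X.card := Finset.card_pos.mpr hX
  have h := sz_aux X n p hp
  match n with
  | 0 =>
    calc _ ≤ _ * X.card := Nat.le_mul_of_pos_right _ hXpos
      _ ≤ p.totalDegree * X.card ^ 0 := h
      _ ≤ d * X.card ^ (0 - 1) := by gcongr
  | (m+1) =>
    have : (m + 1) - 1 = m := rfl
    rw [this]
    apply Nat.le_of_mul_le_mul_right _ hXpos
    calc _ ≤ p.totalDegree * X.card ^ (m+1) := h
      _ = p.totalDegree * X.card ^ m * X.card := by ring
      _ ≤ d * X.card ^ m * X.card := by gcongr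

open scoped Matrix

section Main

variable {F K : Type*} [Field F] [Field K] [Algebra F K]

/-- Dedekind's independence of automorphisms. -/
private lemma algEquiv_linearIndependent :
    LinearIndependent K (fun σ : K ≃ₐ[F] K => (σ : K → K)) := by
  have h := linearIndependent_monoidHom K K
  exact h.comp (fun σ : K ≃ₐ[F] K => ((σ : K →ₐ[F] K) : K →* K))
    (fun σ τ hst => AlgEquiv.ext fun x => DFunLike.congr_fun hst x)

/-- If a `K`-linear combination of the automorphisms kills every element of a basis,
it kills everything. -/
private lemma comb_eq_zero {n : ℕ} (b : Module.Basis (Fin n) F K) (u : (K ≃ₐ[F] K) → K)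
    [Fintype (K ≃ₐ[F] K)]
    (hz : ∀ i : Fin n, ∑ σ : K ≃ₐ[F] K, u σ * σ (b i) = 0) (x : K) :
    ∑ σ : K ≃ₐ[F] K, u σ * σ x = 0 :=
  calc ∑ σ : K ≃ₐ[F] K, u σ * σ x
      = ∑ σ : K ≃ₐ[F] K, ∑ i, algebraMap F K (b.repr x i) * (u σ * σ (b i)) := by
        refine Finset.sum_congr rfl fun σ _ => ?_
        conv_lhs => rw [← b.sum_repr x]
        rw [map_sum, Finset.mul_sum]
        refine Finset.sum_congr rfl fun i _ => ?_
        rw [Algebra.smul_def, map_mul, AlgEquiv.commutes]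
        ring
    _ = ∑ i, algebraMap F K (b.repr x i) * ∑ σ : K ≃ₐ[F] K, u σ * σ (b i) := by
        rw [Finset.sum_comm]
        simp [Finset.mul_sum]
    _ = 0 := by simp [hz]

/-- Dedekind independence, `Fintype` version with the basis. -/
private lemma dedekind_vanish {n : ℕ} (b : Module.Basis (Fin n) F K) (u : (K ≃ₐ[F] K) → K)
    [Fintype (K ≃ₐ[F] K)]
    (hz : ∀ i : Fin n, ∑ σ : K ≃ₐ[F] K, u σ * σ (b i) = 0) : u = 0 := by
  have hli := algEquiv_linearIndependent (F := F) (K := K)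
  funext σ₀
  have h2 : ∑ σ : K ≃ₐ[F] K, u σ • (σ : K → K) = 0 := by
    funext x
    have := comb_eq_zero b u hz x
    simpa [Finset.sum_apply] using this
  exact Fintype.linearIndependent_iff.mp hli u h2 σ₀

end Main

/- STATEMENT 8: for an F-basis b₀,…,b_{n-1} of K and a finite nonempty
X ⊆ F, at most n·|X|^{n-1} tuples a ∈ Xⁿ make Σ_k a_k·b_k non-normal. -/
open Classical in
theorem card_nonNormal_tuples_le
    (F K : Type*) [Field F] [Field K] [CharZero F] [Algebra F K]
    [FiniteDimensional F K] [IsGalois F K]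
    (n : ℕ) (b : Module.Basis (Fin n) F K) (X : Finset F) (hX : X.Nonempty) :
    ((Fintype.piFinset fun _ : Fin n => X).filter fun a =>
        ¬ ∃ bb : Module.Basis (K ≃ₐ[F] K) F K,
            ∀ g : K ≃ₐ[F] K, bb g = g (∑ k, a k • b k)).card
      ≤ n * X.card ^ (n - 1) := by
  classical
  have hK0 : CharZero K := charZero_of_injective_algebraMap (algebraMap F K).injective
  have hn : Fintype.card (K ≃ₐ[F] K) = n := by
    rw [← Nat.card_eq_fintype_card, IsGalois.card_aut_eq_finrank, Module.finrank_eq_card_basis b, Fintype.card_fin]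
  let e : Fin n ≃ (K ≃ₐ[F] K) := Fintype.equivOfCardEq (by rw [Fintype.card_fin, hn])
  -- the "character matrix"
  set Dm : Matrix (K ≃ₐ[F] K) (K ≃ₐ[F] K) K :=
    Matrix.of (fun σ j => σ (b (e.symm j))) with hDmdef
  have hDm : Dm.det ≠ 0 := by
    intro h0
    obtain ⟨u, hu0, hu⟩ := Matrix.exists_vecMul_eq_zero_iff.mpr h0
    refine hu0 (dedekind_vanish b u fun i => ?_)
    have := congrFun hu (e i)
    simpa [Matrix.vecMul, dotProduct, hDmdef] using this
  -- choose evaluation point giving a permutation matrix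
  set y : (K ≃ₐ[F] K) → K := fun σ => if σ = 1 then 1 else 0 with hy
  set c : (K ≃ₐ[F] K) → K := Matrix.mulVec Dm⁻¹ y with hc
  have hDv : ∀ σ : K ≃ₐ[F] K, ∑ i : Fin n, σ (b i) * c (e i) = y σ := by
    have hm : Matrix.mulVec Dm c = y := by
      rw [hc, Matrix.mulVec_mulVec, Matrix.mul_nonsing_inv _ (isUnit_iff_ne_zero.mpr hDm),
        Matrix.one_mulVec]
    intro σ
    have h1 := congrFun hm σ
    rw [Matrix.mulVec, dotProduct] at h1
    calc ∑ i : Fin n, σ (b i) * c (e i)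
        = ∑ i : Fin n, Dm σ (e i) * c (e i) := by
          refine Finset.sum_congr rfl fun i _ => ?_
          rw [hDmdef]
          simp
      _ = ∑ j, Dm σ j * c j := Equiv.sum_comp e (fun j => Dm σ j * c j)
      _ = y σ := h1
  -- the determinant polynomial
  set Q : MvPolynomial (Fin n) K :=
    (Matrix.of fun σ τ : K ≃ₐ[F] K =>
      ∑ k : Fin n, (MvPolynomial.X k : MvPolynomial (Fin n) K)
        * MvPolynomial.C ((σ * τ) (b k))).det with hQ
  have hevalQ : ∀ w : Fin n → K, MvPolynomial.eval w Q =
      (Matrix.of fun σ τ : K ≃ₐ[F] K => ∑ k : Fin n, w k * (σ * τ) (b k)).det := by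
    intro w
    rw [hQ, RingHom.map_det]
    congr 1
    ext σ τ
    simp [Matrix.map_apply]
  have hQne : MvPolynomial.eval (fun i => c (e i)) Q ≠ 0 := by
    rw [hevalQ]
    intro h0
    obtain ⟨u, hu0, hu⟩ := Matrix.exists_vecMul_eq_zero_iff.mpr h0
    apply hu0
    funext τ
    have h1 := congrFun hu τ⁻¹
    rw [Matrix.vecMul, dotProduct] at h1
    have h2 : ∀ σ : K ≃ₐ[F] K, (∑ k : Fin n, c (e k) * (σ * τ⁻¹) (b k))
        = if σ = τ then (1 : K) else 0 := by
      intro σ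
      have : ∑ k : Fin n, c (e k) * (σ * τ⁻¹) (b k) = y (σ * τ⁻¹) := by
        rw [← hDv (σ * τ⁻¹)]
        exact Finset.sum_congr rfl fun k _ => mul_comm _ _
      rw [this, hy]
      simp only [mul_inv_eq_one]
    have h3 : ∑ σ : K ≃ₐ[F] K, u σ * (Matrix.of fun σ τ : K ≃ₐ[F] K =>
        ∑ k : Fin n, c (e k) * (σ * τ) (b k)) σ τ⁻¹ = u τ := by
      calc ∑ σ : K ≃ₐ[F] K, u σ * (Matrix.of fun σ τ : K ≃ₐ[F] K =>
            ∑ k : Fin n, c (e k) * (σ * τ) (b k)) σ τ⁻¹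
          = ∑ σ : K ≃ₐ[F] K, u σ * if σ = τ then 1 else 0 := by
            refine Finset.sum_congr rfl fun σ _ => ?_
            rw [Matrix.of_apply, h2 σ]
        _ = u τ := by simp [mul_ite]
    rw [h3] at h1
    exact h1
  have hQ0 : Q ≠ 0 := fun h => hQne (by rw [h]; simp)
  have hdegQ : Q.totalDegree ≤ n := by
    rw [hQ, Matrix.det_apply]
    refine (MvPolynomial.totalDegree_finset_sum _ _).trans ?_
    refine Finset.sup_le fun π _ => ?_
    refine (MvPolynomial.totalDegree_smul_le _ _).trans ?_
    refine (MvPolynomial.totalDegree_finset_prod _ _).trans ?_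
    calc ∑ τ : K ≃ₐ[F] K, ((Matrix.of fun σ τ : K ≃ₐ[F] K =>
          ∑ k : Fin n, (MvPolynomial.X k : MvPolynomial (Fin n) K)
            * MvPolynomial.C ((σ * τ) (b k))) (π τ) τ).totalDegree
        ≤ ∑ τ : K ≃ₐ[F] K, 1 := by
          refine Finset.sum_le_sum fun τ _ => ?_
          rw [Matrix.of_apply]
          refine (MvPolynomial.totalDegree_finset_sum _ _).trans
            (Finset.sup_le fun k _ => ?_)
          refine (MvPolynomial.totalDegree_mul _ _).trans ?_
          simp [MvPolynomial.totalDegree_X, MvPolynomial.totalDegree_C]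
      _ = n := by simp [hn]
  -- evaluation of Q at F-rational points
  have hevalA : ∀ a : Fin n → F, MvPolynomial.eval (fun k => algebraMap F K (a k)) Q
      = (Matrix.of fun σ τ : K ≃ₐ[F] K => σ (τ (∑ k, a k • b k))).det := by
    intro a
    rw [hevalQ]
    congr 1
    ext σ τ
    rw [Matrix.of_apply, Matrix.of_apply]
    calc ∑ k : Fin n, algebraMap F K (a k) * (σ * τ) (b k)
        = ∑ k : Fin n, σ (τ (a k • b k)) := by
          refine Finset.sum_congr rfl fun k _ => ?_
          rw [Algebra.smul_def, map_mul, map_mul, AlgEquiv.commutes, AlgEquiv.commutes,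
            AlgEquiv.mul_apply]
      _ = σ (τ (∑ k, a k • b k)) := by rw [map_sum, map_sum]
  -- normality is equivalent to nonvanishing of the determinant
  have hiff : ∀ a : Fin n → F,
      (∃ bb : Module.Basis (K ≃ₐ[F] K) F K, ∀ g : K ≃ₐ[F] K, bb g = g (∑ k, a k • b k)) ↔
        (Matrix.of fun σ τ : K ≃ₐ[F] K => σ (τ (∑ k, a k • b k))).det ≠ 0 := by
    intro a
    set α := ∑ k, a k • b k with hα
    constructor
    · rintro ⟨bb, hbb⟩
      have hind : LinearIndependent F (fun τ : K ≃ₐ[F] K => τ α) := by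
        have hbl := bb.linearIndependent
        rwa [show ⇑bb = fun τ : K ≃ₐ[F] K => τ α from funext hbb] at hbl
      intro hdet0
      set Mr : Matrix (K ≃ₐ[F] K) (K ≃ₐ[F] K) F :=
        Matrix.of (fun τ j => b.repr (τ α) (e.symm j)) with hMrdef
      have hMrdet : Mr.det ≠ 0 := by
        intro h0
        obtain ⟨u, hu0, hu⟩ := Matrix.exists_vecMul_eq_zero_iff.mpr h0
        apply hu0
        have hcomb : ∑ τ : K ≃ₐ[F] K, u τ • τ α = 0 := by
          have hrep : ∀ i : Fin n, b.repr (∑ τ : K ≃ₐ[F] K, u τ • τ α) i = 0 := by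
            intro i
            have h1 := congrFun hu (e i)
            rw [Matrix.vecMul, dotProduct] at h1
            simp only [hMrdef, Matrix.of_apply, Equiv.symm_apply_apply] at h1
            rw [map_sum]
            simpa using h1
          have : b.repr (∑ τ : K ≃ₐ[F] K, u τ • τ α) = 0 := by
            ext i
            exact hrep i
          have h2 := congrArg (fun f => b.repr.symm f) this
          simpa using h2
        exact funext (Fintype.linearIndependent_iff.mp hind u hcomb)
      have hfact : (Matrix.of fun σ τ : K ≃ₐ[F] K => σ (τ α))
          = Dm * (Mr.map (algebraMap F K))ᵀ := by
        ext σ τ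
        rw [Matrix.mul_apply, Matrix.of_apply]
        calc σ (τ α)
            = ∑ i : Fin n, algebraMap F K (b.repr (τ α) i) * σ (b i) := by
              conv_lhs => rw [← b.sum_repr (τ α)]
              rw [map_sum]
              refine Finset.sum_congr rfl fun i _ => ?_
              rw [Algebra.smul_def, map_mul, AlgEquiv.commutes]
          _ = ∑ j : K ≃ₐ[F] K, Dm σ j * (Mr.map (algebraMap F K))ᵀ j τ := by
              rw [← Equiv.sum_comp e
                (fun j => Dm σ j * (Mr.map (algebraMap F K))ᵀ j τ)]
              refine Finset.sum_congr rfl fun i _ => ?_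
              rw [hDmdef, hMrdef]
              simp [Matrix.transpose_apply, Matrix.map_apply, mul_comm]
      rw [hfact, Matrix.det_mul] at hdet0
      rcases mul_eq_zero.mp hdet0 with h | h
      · exact hDm h
      · rw [Matrix.det_transpose] at h
        have hmap : algebraMap F K Mr.det = (Mr.map (algebraMap F K)).det := by
          rw [RingHom.map_det, RingHom.mapMatrix_apply]
        rw [← hmap] at h
        exact hMrdet ((map_eq_zero_iff _ (algebraMap F K).injective).mp h)
    · intro hdet
      have hind : LinearIndependent F (fun τ : K ≃ₐ[F] K => τ α) := by
        rw [Fintype.linearIndependent_iff]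
        intro μ hμ
        by_contra hne
        push_neg at hne
        obtain ⟨τ₀, hτ₀⟩ := hne
        apply hdet
        rw [← Matrix.exists_mulVec_eq_zero_iff]
        refine ⟨fun τ => algebraMap F K (μ τ), ?_, ?_⟩
        · intro h0
          exact hτ₀ ((map_eq_zero_iff _ (algebraMap F K).injective).mp (congrFun h0 τ₀))
        · funext σ
          rw [Matrix.mulVec, dotProduct]
          calc ∑ τ : K ≃ₐ[F] K, (Matrix.of fun σ τ : K ≃ₐ[F] K => σ (τ α)) σ τ
                * algebraMap F K (μ τ)
              = ∑ τ : K ≃ₐ[F] K, σ (μ τ • τ α) := by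
                refine Finset.sum_congr rfl fun τ _ => ?_
                rw [Matrix.of_apply, Algebra.smul_def, map_mul, AlgEquiv.commutes]
                ring
            _ = σ (∑ τ : K ≃ₐ[F] K, μ τ • τ α) := by rw [map_sum]
            _ = 0 := by rw [hμ, map_zero]
      have hcard : Fintype.card (K ≃ₐ[F] K) = Module.finrank F K :=
        Nat.card_eq_fintype_card.symm.trans (IsGalois.card_aut_eq_finrank F K)
      refine ⟨basisOfLinearIndependentOfCardEqFinrank hind hcard, fun g => ?_⟩
      exact congrFun (coe_basisOfLinearIndependentOfCardEqFinrank hind hcard) g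
  -- counting
  set X' := X.image (algebraMap F K) with hX'
  have hcount : ((Fintype.piFinset fun _ : Fin n => X).filter fun a =>
      ¬ ∃ bb : Module.Basis (K ≃ₐ[F] K) F K,
          ∀ g : K ≃ₐ[F] K, bb g = g (∑ k, a k • b k)).card
      ≤ ((Fintype.piFinset fun _ : Fin n => X').filter
          fun w => MvPolynomial.eval w Q = 0).card := by
    apply Finset.card_le_card_of_injOn (fun a k => algebraMap F K (a k))
    · intro a ha
      simp only [Finset.mem_coe, Finset.mem_filter, Fintype.mem_piFinset] at ha ⊢
      refine ⟨fun k => Finset.mem_image_of_mem _ (ha.1 k), ?_⟩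
      rw [hevalA a]
      by_contra hne
      exact ha.2 ((hiff a).mpr hne)
    · intro a _ a' _ hfun
      funext k
      exact (algebraMap F K).injective (congrFun hfun k)
  refine hcount.trans ?_
  have hsz := sz Q hQ0 hdegQ X' (hX.image _)
  rwa [hX', Finset.card_image_of_injective _ (algebraMap F K).injective] at hsz
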